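/- arXiv:2307.01661 — 4 statements merged into one kernel-verified Lean document; each statement's English description precedes it below -/
import Mathlib

section
/- Let G be a finite group. Then the enhanced power graph P_E(G) is a line graph of some graph if and only if G is cyclic. -/
open Subgroup

/-- A graph is a line graph if it is isomorphic to the line graph of some graph. -/
def IsLineGraph {V : Type} (Γ : SimpleGraph V) : Prop :=
  ∃ (W : Type) (H : SimpleGraph W), Nonempty (Γ ≃g H.lineGraph)

/-- The power graph of a group: distinct `x`, `y` are adjacent iff one is a power
of the other. -/
def powerGraph (G : Type) [Group G] : SimpleGraph G where
  Adj x y := x ≠ y ∧ (x ∈ zpowers y ∨ y ∈ zpowers x)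
  symm := ⟨by rintro x y ⟨hne, h⟩; exact ⟨hne.symm, h.symm⟩⟩
  loopless := ⟨by rintro x ⟨hne, _⟩; exact hne rfl⟩

/-- The enhanced power graph of a group: distinct `x`, `y` are adjacent iff both are
powers of a common element. -/
def enhancedPowerGraph (G : Type) [Group G] : SimpleGraph G where
  Adj x y := x ≠ y ∧ ∃ z : G, x ∈ zpowers z ∧ y ∈ zpowers z
  symm := ⟨by rintro x y ⟨hne, z, hx, hy⟩; exact ⟨hne.symm, z, hy, hx⟩⟩
  loopless := ⟨by rintro x ⟨hne, _⟩; exact hne rfl⟩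

/-- A vertex is dominating if it is adjacent to all other vertices. -/
def IsDominatingVertex {V : Type} (Γ : SimpleGraph V) (v : V) : Prop :=
  ∀ w : V, w ≠ v → Γ.Adj v w

/-- The graph induced on the non-dominating vertices. -/
def properGraph {V : Type} (Γ : SimpleGraph V) :
    SimpleGraph {v : V | ¬ IsDominatingVertex Γ v} :=
  Γ.induce {v : V | ¬ IsDominatingVertex Γ v}

/-- The proper power graph `P**(G)`. -/
abbrev properPowerGraph (G : Type) [Group G] := properGraph (powerGraph G)

/-- The proper enhanced power graph `P_E**(G)`. -/
abbrev properEnhancedPowerGraph (G : Type) [Group G] := properGraph (enhancedPowerGraph G)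

/-- A maximal cyclic subgroup: cyclic and not properly contained in a cyclic subgroup. -/
def IsMaxCyclic {G : Type} [Group G] (M : Subgroup G) : Prop :=
  IsCyclic M ∧ ∀ N : Subgroup G, IsCyclic N → M ≤ N → N = M

/-- `T(G)`: the intersection of all maximal cyclic subgroups of `G`. -/
def cyclicCore (G : Type) [Group G] : Subgroup G :=
  ⨅ (M : Subgroup G) (_ : IsMaxCyclic M), M

/-- `G` is an elementary abelian 2-group `Z₂ × ⋯ × Z₂`. -/
def IsElemAbelianTwo (G : Type) [Group G] : Prop :=
  ∃ k : ℕ, 1 ≤ k ∧ Nonempty (G ≃* (Fin k → Multiplicative (ZMod 2)))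


section Aux

variable {G : Type} [Group G]

lemma zpowersIsCyclic (g : G) : IsCyclic (zpowers g) := by
  refine ⟨⟨g, mem_zpowers g⟩, ?_⟩
  rintro ⟨x, hx⟩
  obtain ⟨n, hn⟩ := mem_zpowers_iff.mp hx
  exact ⟨n, Subtype.ext (by simpa using hn)⟩

lemma isCyclic_exists_zpowers_eq (M : Subgroup G) (h : IsCyclic M) :
    ∃ g : G, zpowers g = M := by
  obtain ⟨⟨g, hg⟩, hgen⟩ := h.exists_generator
  refine ⟨g, le_antisymm (zpowers_le.mpr hg) ?_⟩
  intro x hx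
  obtain ⟨n, hn⟩ := mem_zpowers_iff.mp (hgen ⟨x, hx⟩)
  exact mem_zpowers_iff.mpr ⟨n, by simpa using congrArg Subtype.val hn⟩

lemma exists_maxCyclic [Fintype G] (x : G) : ∃ M : Subgroup G, IsMaxCyclic M ∧ x ∈ M := by
  have hfin : ({N : Subgroup G | IsCyclic N ∧ x ∈ N}).Finite := Set.toFinite _
  have hne : zpowers x ∈ {N : Subgroup G | IsCyclic N ∧ x ∈ N} :=
    ⟨zpowersIsCyclic x, mem_zpowers x⟩
  obtain ⟨M, hM, hmax⟩ := Set.Finite.exists_maximalFor id _ hfin ⟨_, hne⟩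
  exact ⟨M, ⟨hM.1, fun N hN hMN => le_antisymm (hmax ⟨hN, hMN hM.2⟩ hMN) hMN⟩, hM.2⟩

lemma maxCyclic_ne_top [Fintype G] (h : ¬ IsCyclic G) {M : Subgroup G}
    (hM : IsMaxCyclic M) : M ≠ ⊤ := by
  rintro rfl
  haveI : IsCyclic (⊤ : Subgroup G) := hM.1
  exact h (isCyclic_of_surjective Subgroup.topEquiv.toMonoidHom Subgroup.topEquiv.surjective)

lemma three_maxCyclic [Fintype G] (h : ¬ IsCyclic G) :
    ∃ M₁ M₂ M₃ : Subgroup G, IsMaxCyclic M₁ ∧ IsMaxCyclic M₂ ∧ IsMaxCyclic M₃ ∧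
      M₁ ≠ M₂ ∧ M₁ ≠ M₃ ∧ M₂ ≠ M₃ := by
  obtain ⟨M₁, hM₁, -⟩ := exists_maxCyclic (G := G) 1
  have h₁ : M₁ ≠ ⊤ := maxCyclic_ne_top h hM₁
  obtain ⟨x, hx⟩ : ∃ x : G, x ∉ M₁ := by
    by_contra hc
    push_neg at hc
    exact h₁ ((eq_top_iff' M₁).mpr hc)
  obtain ⟨M₂, hM₂, hxM₂⟩ := exists_maxCyclic x
  have h12 : M₁ ≠ M₂ := fun he => hx (he ▸ hxM₂)
  obtain ⟨m, hm₁, hm₂⟩ : ∃ m : G, m ∈ M₁ ∧ m ∉ M₂ := by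
    by_contra hc
    push_neg at hc
    exact h12 ((hM₁.2 M₂ hM₂.1 hc).symm)
  have hy₁ : m * x ∉ M₁ := fun hy => hx (by simpa using mul_mem (inv_mem hm₁) hy)
  have hy₂ : m * x ∉ M₂ := fun hy => hm₂ (by simpa using mul_mem hy (inv_mem hxM₂))
  obtain ⟨M₃, hM₃, hyM₃⟩ := exists_maxCyclic (m * x)
  exact ⟨M₁, M₂, M₃, hM₁, hM₂, hM₃, h12,
    fun he => hy₁ (he ▸ hyM₃), fun he => hy₂ (he ▸ hyM₃)⟩

lemma sym2_three {W : Type} (s : Sym2 W) (x y z : W) (hx : x ∈ s) (hy : y ∈ s) (hz : z ∈ s) :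
    x = y ∨ x = z ∨ y = z := by
  induction s using Sym2.ind with
  | _ u w => rw [Sym2.mem_iff] at hx hy hz; rcases hx with rfl | rfl <;>
      rcases hy with rfl | rfl <;> rcases hz with rfl | rfl <;> tauto

lemma no_claw_in_lineGraph {W : Type} {H : SimpleGraph W} (e a b c : H.edgeSet)
    (hea : H.lineGraph.Adj e a) (heb : H.lineGraph.Adj e b) (hec : H.lineGraph.Adj e c)
    (hab' : a ≠ b) (hac' : a ≠ c) (hbc' : b ≠ c)
    (hab : ¬ H.lineGraph.Adj a b) (hac : ¬ H.lineGraph.Adj a c)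
    (hbc : ¬ H.lineGraph.Adj b c) : False := by
  rw [SimpleGraph.lineGraph_adj_iff_exists] at hea heb hec
  obtain ⟨-, va, hvae, hvaa⟩ := hea
  obtain ⟨-, vb, hvbe, hvbb⟩ := heb
  obtain ⟨-, vc, hvce, hvcc⟩ := hec
  rcases sym2_three _ va vb vc hvae hvbe hvce with rfl | rfl | rfl
  · exact hab (SimpleGraph.lineGraph_adj_iff_exists.mpr ⟨hab', va, hvaa, hvbb⟩)
  · exact hac (SimpleGraph.lineGraph_adj_iff_exists.mpr ⟨hac', va, hvaa, hvcc⟩)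
  · exact hbc (SimpleGraph.lineGraph_adj_iff_exists.mpr ⟨hbc', vb, hvbb, hvcc⟩)

/-- The star graph on `Option G` with center `none`. -/
def starGraph (G : Type) : SimpleGraph (Option G) where
  Adj a b := a ≠ b ∧ (a = none ∨ b = none)
  symm := ⟨by rintro a b ⟨h1, h2⟩; exact ⟨h1.symm, h2.symm⟩⟩
  loopless := ⟨by rintro a ⟨h1, -⟩; exact h1 rfl⟩

omit [Group G] in
lemma starGraph_edge_mem (g : G) : s((none : Option G), some g) ∈ (starGraph G).edgeSet := by
  rw [SimpleGraph.mem_edgeSet]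
  exact ⟨by simp, Or.inl rfl⟩

end Aux

/-- `P_E(G)` is a line graph iff `G` is cyclic. -/
theorem enhancedPowerGraph_isLineGraph_iff (G : Type) [Group G] [Fintype G] :
    IsLineGraph (enhancedPowerGraph G) ↔ IsCyclic G := by
  constructor
  · rintro ⟨W, H, ⟨φ⟩⟩
    by_contra hG
    obtain ⟨M₁, M₂, M₃, hM₁, hM₂, hM₃, h12, h13, h23⟩ := three_maxCyclic hG
    obtain ⟨a, ha⟩ := isCyclic_exists_zpowers_eq M₁ hM₁.1
    obtain ⟨b, hb⟩ := isCyclic_exists_zpowers_eq M₂ hM₂.1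
    obtain ⟨c, hc⟩ := isCyclic_exists_zpowers_eq M₃ hM₃.1
    have hne1 : ∀ (u : G) (M N : Subgroup G), zpowers u = M → IsMaxCyclic M →
        IsMaxCyclic N → M ≠ N → u ≠ 1 := by
      rintro u M N hu hM hN hMN rfl
      have hMN' : M ≤ N := hu ▸ zpowers_le.mpr (one_mem N)
      exact hMN (hM.2 N hN.1 hMN').symm
    have nadj : ∀ (u v : G) (M N : Subgroup G), zpowers u = M → zpowers v = N →
        IsMaxCyclic M → IsMaxCyclic N → M ≠ N → ¬ (enhancedPowerGraph G).Adj u v := by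
      rintro u v M N hu hv hM hN hMN ⟨-, z, hz1, hz2⟩
      have h1 : M ≤ zpowers z := hu ▸ zpowers_le.mpr hz1
      have h2 : N ≤ zpowers z := hv ▸ zpowers_le.mpr hz2
      have e1 : zpowers z = M := hM.2 _ (zpowersIsCyclic z) h1
      have e2 : zpowers z = N := hN.2 _ (zpowersIsCyclic z) h2
      exact hMN (e1 ▸ e2)
    have ha1 : a ≠ 1 := hne1 a M₁ M₂ ha hM₁ hM₂ h12
    have hb1 : b ≠ 1 := hne1 b M₂ M₁ hb hM₂ hM₁ h12.symm
    have hc1 : c ≠ 1 := hne1 c M₃ M₁ hc hM₃ hM₁ h13.symm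
    have adj1a : (enhancedPowerGraph G).Adj 1 a :=
      ⟨fun h => ha1 h.symm, a, one_mem _, mem_zpowers a⟩
    have adj1b : (enhancedPowerGraph G).Adj 1 b :=
      ⟨fun h => hb1 h.symm, b, one_mem _, mem_zpowers b⟩
    have adj1c : (enhancedPowerGraph G).Adj 1 c :=
      ⟨fun h => hc1 h.symm, c, one_mem _, mem_zpowers c⟩
    have hab : a ≠ b := fun h => h12 (ha ▸ hb ▸ h ▸ rfl)
    have hac : a ≠ c := fun h => h13 (ha ▸ hc ▸ h ▸ rfl)
    have hbc : b ≠ c := fun h => h23 (hb ▸ hc ▸ h ▸ rfl)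
    exact no_claw_in_lineGraph (φ 1) (φ a) (φ b) (φ c)
      (φ.map_rel_iff.mpr adj1a) (φ.map_rel_iff.mpr adj1b) (φ.map_rel_iff.mpr adj1c)
      (fun h => hab (φ.toEquiv.injective h)) (fun h => hac (φ.toEquiv.injective h))
      (fun h => hbc (φ.toEquiv.injective h))
      (fun h => nadj a b M₁ M₂ ha hb hM₁ hM₂ h12 (φ.map_rel_iff.mp h))
      (fun h => nadj a c M₁ M₃ ha hc hM₁ hM₃ h13 (φ.map_rel_iff.mp h))
      (fun h => nadj b c M₂ M₃ hb hc hM₂ hM₃ h23 (φ.map_rel_iff.mp h))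
  · intro hcyc
    obtain ⟨g, hg⟩ := hcyc.exists_generator
    refine ⟨Option G, starGraph G, ⟨?_⟩⟩
    set f : G → (starGraph G).edgeSet :=
      fun x => ⟨s((none : Option G), some x), starGraph_edge_mem x⟩ with hf
    have hinj : Function.Injective f := by
      intro x y hxy
      have h2 := congrArg Subtype.val hxy
      simp only [hf, Sym2.eq_iff] at h2
      rcases h2 with ⟨-, h⟩ | ⟨h, -⟩
      · exact Option.some_injective _ h
      · exact absurd h (by simp)
    have hsurj : Function.Surjective f := by
      rintro ⟨e, he⟩
      induction e using Sym2.ind with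
      | _ u v =>
        rw [SimpleGraph.mem_edgeSet] at he
        obtain ⟨hne, h | h⟩ := he
        · subst h
          obtain ⟨x, rfl⟩ : ∃ x, v = some x :=
            Option.ne_none_iff_exists'.mp (fun hv => hne (hv ▸ rfl))
          exact ⟨x, rfl⟩
        · subst h
          obtain ⟨x, rfl⟩ : ∃ x, u = some x :=
            Option.ne_none_iff_exists'.mp (fun hv => hne (by rw [hv]))
          exact ⟨x, Subtype.ext Sym2.eq_swap⟩
    refine ⟨Equiv.ofBijective f ⟨hinj, hsurj⟩, ?_⟩
    intro x y
    rw [show (Equiv.ofBijective f ⟨hinj, hsurj⟩) x = f x from rfl,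
      show (Equiv.ofBijective f ⟨hinj, hsurj⟩) y = f y from rfl,
      SimpleGraph.lineGraph_adj_iff_exists]
    constructor
    · rintro ⟨hne, -⟩
      exact ⟨fun h => hne (by rw [h]), g, hg x, hg y⟩
    · rintro ⟨hne, -⟩
      exact ⟨fun h => hne (hinj h), none, by simp [hf], by simp [hf]⟩
end

section
/- Let G be a finite non-cyclic group of odd order. Then the proper enhanced power graph P_E**(G) is a line graph of some graph if and only if the intersection of any two distinct maximal cyclic subgroups of G equals T(G), the intersection of all maximal cyclic subgroups of G. -/
open Subgroup

section Aux

variable {G : Type} [Group G]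

omit [Group G] in
lemma zp_isCyclic [Group G] (g : G) : IsCyclic (Subgroup.zpowers g) :=
  ⟨⟨⟨g, Subgroup.mem_zpowers g⟩, fun ⟨x, hx⟩ => by
      obtain ⟨n, hn⟩ := hx
      exact ⟨n, Subtype.ext (by simpa using hn)⟩⟩⟩

lemma exists_maxCyclic_mem [Fintype G] (g : G) :
    ∃ M : Subgroup G, IsMaxCyclic M ∧ g ∈ M := by
  classical
  obtain ⟨M, hM, hmax⟩ := Set.Finite.exists_maximalFor (id : Subgroup G → Subgroup G)
    {H : Subgroup G | IsCyclic H ∧ g ∈ H} (Set.toFinite _)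
    ⟨Subgroup.zpowers g, zp_isCyclic g, Subgroup.mem_zpowers g⟩
  refine ⟨M, ⟨hM.1, fun N hN hMN => ?_⟩, hM.2⟩
  exact le_antisymm (hmax ⟨hN, hMN hM.2⟩ hMN) hMN

lemma maxCyclic_exists_gen {M : Subgroup G} (hM : IsCyclic M) :
    ∃ z : G, M = Subgroup.zpowers z := by
  obtain ⟨⟨z, hz⟩, hgen⟩ := hM.exists_generator
  refine ⟨z, le_antisymm ?_ ?_⟩
  · intro x hx
    obtain ⟨n, hn⟩ := hgen ⟨x, hx⟩
    exact ⟨n, by simpa using congrArg Subtype.val hn⟩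
  · simpa [Subgroup.zpowers_le] using hz

lemma mem_cyclicCore_iff {x : G} :
    x ∈ cyclicCore G ↔ ∀ M : Subgroup G, IsMaxCyclic M → x ∈ M := by
  simp [cyclicCore, Subgroup.mem_iInf]

lemma cyclicCore_le {M : Subgroup G} (hM : IsMaxCyclic M) : cyclicCore G ≤ M :=
  fun _ hx => mem_cyclicCore_iff.mp hx M hM

lemma epg_adj_iff [Fintype G] {x y : G} :
    (enhancedPowerGraph G).Adj x y ↔
      x ≠ y ∧ ∃ M : Subgroup G, IsMaxCyclic M ∧ x ∈ M ∧ y ∈ M := by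
  constructor
  · rintro ⟨hne, z, hx, hy⟩
    obtain ⟨M, hM, hz⟩ := exists_maxCyclic_mem z
    have hle : Subgroup.zpowers z ≤ M := (Subgroup.zpowers_le).mpr hz
    exact ⟨hne, M, hM, hle hx, hle hy⟩
  · rintro ⟨hne, M, hM, hx, hy⟩
    obtain ⟨z, hz⟩ := maxCyclic_exists_gen hM.1
    exact ⟨hne, z, hz ▸ hx, hz ▸ hy⟩

lemma dominating_iff_mem_core [Fintype G] {v : G} :
    IsDominatingVertex (enhancedPowerGraph G) v ↔ v ∈ cyclicCore G := by
  constructor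
  · intro hdom
    rw [mem_cyclicCore_iff]
    intro M hM
    obtain ⟨z, hz⟩ := maxCyclic_exists_gen hM.1
    by_cases hvz : z = v
    · rw [hz, ← hvz]; exact Subgroup.mem_zpowers z
    · obtain ⟨-, u, hvu, hzu⟩ := hdom z hvz
      have h1 : M ≤ Subgroup.zpowers u := by
        rw [hz, Subgroup.zpowers_le]; exact hzu
      have h2 : Subgroup.zpowers u = M := hM.2 _ (zp_isCyclic u) h1
      exact h2 ▸ hvu
  · intro hv w hw
    obtain ⟨M, hM, hwM⟩ := exists_maxCyclic_mem w
    obtain ⟨z, hz⟩ := maxCyclic_exists_gen hM.1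
    exact ⟨fun h => hw h.symm, z, hz ▸ mem_cyclicCore_iff.mp hv M hM, hz ▸ hwM⟩

lemma proper_adj {V : Type} (Γ : SimpleGraph V)
    (a b : {v : V | ¬ IsDominatingVertex Γ v}) :
    (properGraph Γ).Adj a b ↔ Γ.Adj a b := Iff.rfl

/-- The key combinatorial fact: a line graph contains no induced copy of two `K₄`s
glued along an edge. -/
lemma no_glued_K4 {W : Type} (H : SimpleGraph W) (A B C D E F : H.edgeSet)
    (hAB : H.lineGraph.Adj A B)
    (hAC : H.lineGraph.Adj A C) (hAD : H.lineGraph.Adj A D)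
    (hAE : H.lineGraph.Adj A E) (hAF : H.lineGraph.Adj A F)
    (hBC : H.lineGraph.Adj B C) (hBD : H.lineGraph.Adj B D)
    (hBE : H.lineGraph.Adj B E) (hBF : H.lineGraph.Adj B F)
    (hCD : H.lineGraph.Adj C D) (hEF : H.lineGraph.Adj E F)
    (hCE : ¬ H.lineGraph.Adj C E) (hCF : ¬ H.lineGraph.Adj C F)
    (hDE : ¬ H.lineGraph.Adj D E)
    (hCE' : C ≠ E) (hCF' : C ≠ F) (hDE' : D ≠ E) : False := by
  obtain ⟨hABne, a, haA, haB⟩ := SimpleGraph.lineGraph_adj_iff_exists.mp hAB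
  obtain ⟨b, hb⟩ := Sym2.mem_iff_exists.mp haA
  obtain ⟨c, hc⟩ := Sym2.mem_iff_exists.mp haB
  have hbc : b ≠ c := by
    rintro rfl
    exact hABne (Subtype.ext (hb.trans hc.symm))
  -- every common neighbour of A and B either contains a or equals s(b,c)
  have key : ∀ X : H.edgeSet, H.lineGraph.Adj A X → H.lineGraph.Adj B X →
      a ∈ (X : Sym2 W) ∨ (X : Sym2 W) = s(b, c) := by
    intro X hAX hBX
    obtain ⟨-, p, hpA, hpX⟩ := SimpleGraph.lineGraph_adj_iff_exists.mp hAX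
    obtain ⟨-, q, hqB, hqX⟩ := SimpleGraph.lineGraph_adj_iff_exists.mp hBX
    rw [hb, Sym2.mem_iff] at hpA
    rw [hc, Sym2.mem_iff] at hqB
    rcases hpA with rfl | rfl
    · exact Or.inl hpX
    rcases hqB with rfl | rfl
    · exact Or.inl hqX
    exact Or.inr ((Sym2.mem_and_mem_iff hbc).mp ⟨hpX, hqX⟩)
  have adj_of : ∀ X Y : H.edgeSet, X ≠ Y → a ∈ (X : Sym2 W) → a ∈ (Y : Sym2 W) →
      H.lineGraph.Adj X Y := fun X Y hne hX hY =>
    SimpleGraph.lineGraph_adj_iff_exists.mpr ⟨hne, a, hX, hY⟩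
  rcases key C hAC hBC with hCa | hCq
  · rcases key E hAE hBE with hEa | hEq
    · exact hCE (adj_of C E hCE' hCa hEa)
    · rcases key F hAF hBF with hFa | hFq
      · exact hCF (adj_of C F hCF' hCa hFa)
      · exact hEF.ne (Subtype.ext (hEq.trans hFq.symm))
  · rcases key E hAE hBE with hEa | hEq
    · rcases key D hAD hBD with hDa | hDq
      · exact hDE (adj_of D E hDE' hDa hEa)
      · exact hCD.ne (Subtype.ext (hCq.trans hDq.symm))
    · exact hCE' (Subtype.ext (hCq.trans hEq.symm))

end Aux

/-- for a finite non-cyclic group of odd order, `P_E**(G)` is a line graph iff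
the intersection of any two distinct maximal cyclic subgroups equals `T(G)`. -/
theorem properEnhancedPowerGraph_isLineGraph_iff_of_odd (G : Type) [Group G] [Fintype G]
    (hnc : ¬ IsCyclic G) (hodd : Odd (Nat.card G)) :
    IsLineGraph (properEnhancedPowerGraph G) ↔
      (∀ M N : Subgroup G, IsMaxCyclic M → IsMaxCyclic N → M ≠ N →
        M ⊓ N = cyclicCore G) := by
  classical
  have hsq : ∀ g : G, g ≠ 1 → g⁻¹ ≠ g := by
    intro g hg1 h
    have h2 : g ^ 2 = 1 := by
      nth_rewrite 1 [pow_two]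
      nth_rewrite 2 [← h]
      simp
    have hdvd : orderOf g ∣ 2 := orderOf_dvd_of_pow_eq_one h2
    rcases (Nat.prime_two.eq_one_or_self_of_dvd _ hdvd) with ho | ho
    · exact hg1 (orderOf_eq_one_iff.mp ho)
    · have h2d : (2 : ℕ) ∣ Nat.card G := ho ▸ orderOf_dvd_natCard g
      rw [Nat.odd_iff] at hodd
      omega
  constructor
  · -- line graph → intersections are the core
    rintro ⟨W, H, ⟨ψ⟩⟩ M N hM hN hMN
    by_contra hnecc
    have hle : cyclicCore G ≤ M ⊓ N := le_inf (cyclicCore_le hM) (cyclicCore_le hN)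
    obtain ⟨t, htMN, htT⟩ := SetLike.exists_of_lt (lt_of_le_of_ne hle (Ne.symm hnecc))
    obtain ⟨x, hx⟩ := maxCyclic_exists_gen hM.1
    obtain ⟨y, hy⟩ := maxCyclic_exists_gen hN.1
    have htM : t ∈ M := htMN.1
    have htN : t ∈ N := htMN.2
    have hxN : x ∉ N := by
      intro hxN
      have hMle : M ≤ N := by rw [hx, Subgroup.zpowers_le]; exact hxN
      exact hMN ((hM.2 N hN.1 hMle).symm)
    have hyM : y ∉ M := by
      intro hyM
      have hNle : N ≤ M := by rw [hy, Subgroup.zpowers_le]; exact hyM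
      exact hMN (hN.2 M hM.1 hNle)
    have hxiN : x⁻¹ ∉ N := fun h => hxN (by simpa using N.inv_mem h)
    have hyiM : y⁻¹ ∉ M := fun h => hyM (by simpa using M.inv_mem h)
    have hx1 : x ≠ 1 := fun h => hxN (h ▸ N.one_mem)
    have hy1 : y ≠ 1 := fun h => hyM (h ▸ M.one_mem)
    have ht1 : t ≠ 1 := fun h => htT (h ▸ (cyclicCore G).one_mem)
    have htiT : t⁻¹ ∉ cyclicCore G := fun h => htT (by simpa using (cyclicCore G).inv_mem h)
    have hxT : x ∉ cyclicCore G := fun h => hxN (mem_cyclicCore_iff.mp h N hN)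
    have hxiT : x⁻¹ ∉ cyclicCore G := fun h => hxiN (mem_cyclicCore_iff.mp h N hN)
    have hyT : y ∉ cyclicCore G := fun h => hyM (mem_cyclicCore_iff.mp h M hM)
    have hyiT : y⁻¹ ∉ cyclicCore G := fun h => hyiM (mem_cyclicCore_iff.mp h M hM)
    -- the six vertices
    have mkmem : ∀ {g : G}, g ∉ cyclicCore G →
        g ∈ {v : G | ¬ IsDominatingVertex (enhancedPowerGraph G) v} :=
      fun hg hd => hg (dominating_iff_mem_core.mp hd)
    set S := {v : G | ¬ IsDominatingVertex (enhancedPowerGraph G) v} with hS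
    let vt : S := ⟨t, mkmem htT⟩
    let vti : S := ⟨t⁻¹, mkmem htiT⟩
    let vx : S := ⟨x, mkmem hxT⟩
    let vxi : S := ⟨x⁻¹, mkmem hxiT⟩
    let vy : S := ⟨y, mkmem hyT⟩
    let vyi : S := ⟨y⁻¹, mkmem hyiT⟩
    have htti : t ≠ t⁻¹ := (hsq t ht1).symm
    have hxxi : x ≠ x⁻¹ := (hsq x hx1).symm
    have hyyi : y ≠ y⁻¹ := (hsq y hy1).symm
    have htx : t ≠ x := fun h => hxN (h ▸ htN)
    have htxi : t ≠ x⁻¹ := fun h => hxiN (h ▸ htN)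
    have hty : t ≠ y := fun h => hyM (h ▸ htM)
    have htyi : t ≠ y⁻¹ := fun h => hyiM (h ▸ htM)
    have htiN : t⁻¹ ∈ N := N.inv_mem htN
    have htiM : t⁻¹ ∈ M := M.inv_mem htM
    have htix : t⁻¹ ≠ x := fun h => hxN (h ▸ htiN)
    have htixi : t⁻¹ ≠ x⁻¹ := fun h => hxiN (h ▸ htiN)
    have htiy : t⁻¹ ≠ y := fun h => hyM (h ▸ htiM)
    have htiyi : t⁻¹ ≠ y⁻¹ := fun h => hyiM (h ▸ htiM)
    have hyN : y ∈ N := hy ▸ Subgroup.mem_zpowers y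
    have hyiN : y⁻¹ ∈ N := N.inv_mem hyN
    have hxM : x ∈ M := hx ▸ Subgroup.mem_zpowers x
    have hxiM : x⁻¹ ∈ M := M.inv_mem hxM
    have hxy : x ≠ y := fun h => hxN (h ▸ hyN)
    have hxyi : x ≠ y⁻¹ := fun h => hxN (h ▸ hyiN)
    have hxiy : x⁻¹ ≠ y := fun h => hxiN (h ▸ hyN)
    have hxiyi : x⁻¹ ≠ y⁻¹ := fun h => hxiN (h ▸ hyiN)
    -- adjacency facts
    have adjM : ∀ u v : G, u ∈ M → v ∈ M → u ≠ v → (enhancedPowerGraph G).Adj u v := by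
      intro u v hu hv huv
      exact epg_adj_iff.mpr ⟨huv, M, hM, hu, hv⟩
    have adjN : ∀ u v : G, u ∈ N → v ∈ N → u ≠ v → (enhancedPowerGraph G).Adj u v := by
      intro u v hu hv huv
      exact epg_adj_iff.mpr ⟨huv, N, hN, hu, hv⟩
    have nonadj : ∀ u v : G, (u = x ∨ u = x⁻¹) → (v = y ∨ v = y⁻¹) →
        ¬ (enhancedPowerGraph G).Adj u v := by
      intro u v hu hv hadj
      obtain ⟨hne, K, hK, huK, hvK⟩ := epg_adj_iff.mp hadj
      have hxK : x ∈ K := by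
        rcases hu with rfl | rfl
        · exact huK
        · simpa using K.inv_mem huK
      have hKM : K = M := hM.2 K hK.1 (by rw [hx, Subgroup.zpowers_le]; exact hxK)
      rcases hv with rfl | rfl
      · exact hyM (hKM ▸ hvK)
      · exact hyiM (hKM ▸ hvK)
    -- transport to the line graph
    have hinj : ∀ {p q : ↥S}, (p : G) ≠ (q : G) → ψ p ≠ ψ q := by
      intro p q hpq h
      exact hpq (congrArg Subtype.val (ψ.toEquiv.injective h))
    have hmap : ∀ {p q : ↥S}, (enhancedPowerGraph G).Adj p q →
        H.lineGraph.Adj (ψ p) (ψ q) := fun h => ψ.map_rel_iff.mpr h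
    have hmapn : ∀ {p q : ↥S}, ¬ (enhancedPowerGraph G).Adj p q →
        ¬ H.lineGraph.Adj (ψ p) (ψ q) := fun h h' => h (ψ.map_rel_iff.mp h')
    exact no_glued_K4 H (ψ vt) (ψ vti) (ψ vx) (ψ vxi) (ψ vy) (ψ vyi)
      (hmap (adjM t t⁻¹ htM htiM htti))
      (hmap (adjM t x htM hxM htx))
      (hmap (adjM t x⁻¹ htM hxiM htxi))
      (hmap (adjN t y htN hyN hty))
      (hmap (adjN t y⁻¹ htN hyiN htyi))
      (hmap (adjM t⁻¹ x htiM hxM htix))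
      (hmap (adjM t⁻¹ x⁻¹ htiM hxiM htixi))
      (hmap (adjN t⁻¹ y htiN hyN htiy))
      (hmap (adjN t⁻¹ y⁻¹ htiN hyiN htiyi))
      (hmap (adjM x x⁻¹ hxM hxiM hxxi))
      (hmap (adjN y y⁻¹ hyN hyiN hyyi))
      (hmapn (nonadj x y (Or.inl rfl) (Or.inl rfl)))
      (hmapn (nonadj x y⁻¹ (Or.inl rfl) (Or.inr rfl)))
      (hmapn (nonadj x⁻¹ y (Or.inr rfl) (Or.inl rfl)))
      (hinj hxy) (hinj hxyi) (hinj hxiy)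
  · -- intersections are the core → line graph
    intro hcond
    set S := {v : G | ¬ IsDominatingVertex (enhancedPowerGraph G) v} with hS
    let C := {M : Subgroup G // IsMaxCyclic M}
    have hex : ∀ v : ↥S, ∃ M : Subgroup G, IsMaxCyclic M ∧ (v : G) ∈ M :=
      fun v => exists_maxCyclic_mem (v : G)
    let c : ↥S → C := fun v => ⟨(hex v).choose, (hex v).choose_spec.1⟩
    have hc : ∀ v : ↥S, (v : G) ∈ (c v).1 := fun v => (hex v).choose_spec.2
    have huniq : ∀ (v : ↥S) (M : Subgroup G), IsMaxCyclic M → (v : G) ∈ M →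
        M = (c v).1 := by
      intro v M hM hvM
      by_contra hne
      have hmem : (v : G) ∈ M ⊓ (c v).1 := ⟨hvM, hc v⟩
      rw [hcond M (c v).1 hM (c v).2 hne] at hmem
      exact v.2 (dominating_iff_mem_core.mpr hmem)
    -- the host graph: a disjoint union of stars
    let H : SimpleGraph (↥S ⊕ C) :=
    { Adj := fun a b =>
        (∃ v : ↥S, a = Sum.inl v ∧ b = Sum.inr (c v)) ∨
        (∃ v : ↥S, b = Sum.inl v ∧ a = Sum.inr (c v))
      symm := ⟨by
        rintro a b (⟨v, rfl, rfl⟩ | ⟨v, rfl, rfl⟩)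
        · exact Or.inr ⟨v, rfl, rfl⟩
        · exact Or.inl ⟨v, rfl, rfl⟩⟩
      loopless := ⟨by
        rintro a (⟨v, rfl, h⟩ | ⟨v, rfl, h⟩) <;> simp at h⟩ }
    let f : ↥S → H.edgeSet := fun v =>
      ⟨s(Sum.inl v, Sum.inr (c v)), H.mem_edgeSet.mpr (Or.inl ⟨v, rfl, rfl⟩)⟩
    have hfinj : Function.Injective f := by
      intro v w h
      have h' := congrArg Subtype.val h
      simp only [f] at h'
      rcases Sym2.eq_iff.mp h' with ⟨h1, -⟩ | ⟨h1, -⟩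
      · exact Sum.inl.inj h1
      · exact absurd h1 (by simp)
    have hfsurj : Function.Surjective f := by
      rintro ⟨e, he⟩
      induction e using Sym2.ind with
      | _ a b =>
        rw [SimpleGraph.mem_edgeSet] at he
        rcases he with ⟨v, rfl, rfl⟩ | ⟨v, rfl, rfl⟩
        · exact ⟨v, rfl⟩
        · exact ⟨v, Subtype.ext (Sym2.eq_swap)⟩
    -- adjacency characterisation
    have hadjc : ∀ v w : ↥S, (properEnhancedPowerGraph G).Adj v w ↔
        (v ≠ w ∧ c v = c w) := by
      intro v w
      rw [proper_adj, epg_adj_iff]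
      constructor
      · rintro ⟨hne, M, hM, hv, hw⟩
        refine ⟨fun h => hne (congrArg Subtype.val h), ?_⟩
        exact Subtype.ext (((huniq v M hM hv).symm).trans (huniq w M hM hw))
      · rintro ⟨hne, hcc⟩
        refine ⟨fun h => hne (Subtype.ext h), (c v).1, (c v).2, hc v, ?_⟩
        rw [hcc]; exact hc w
    have hladj : ∀ v w : ↥S, H.lineGraph.Adj (f v) (f w) ↔ (v ≠ w ∧ c v = c w) := by
      intro v w
      rw [SimpleGraph.lineGraph_adj_iff_exists]
      constructor
      · rintro ⟨hne, u, hu1, hu2⟩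
        have hvw : v ≠ w := by
          rintro rfl
          exact hne rfl
        refine ⟨hvw, ?_⟩
        simp only [f] at hu1 hu2
        rw [Sym2.mem_iff] at hu1 hu2
        rcases hu1 with rfl | rfl
        · rcases hu2 with h | h
          · exact absurd (Sum.inl.inj h) hvw
          · exact absurd h (by simp)
        · rcases hu2 with h | h
          · exact absurd h.symm (by simp)
          · exact Sum.inr.inj h
      · rintro ⟨hne, hcc⟩
        refine ⟨fun h => hne (hfinj h), Sum.inr (c v), ?_, ?_⟩
        · simp [f]
        · simp only [f, hcc]
          simp
    exact ⟨↥S ⊕ C, H, ⟨⟨Equiv.ofBijective f ⟨hfinj, hfsurj⟩, by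
      intro v w
      change H.lineGraph.Adj (f v) (f w) ↔ (properEnhancedPowerGraph G).Adj v w
      rw [hladj v w, hadjc v w]⟩⟩⟩
end

section
/- Let G be a finite non-cyclic nilpotent group. If the proper enhanced power graph P_E**(G) is a line graph of some graph, then there is exactly one prime p dividing |G| whose Sylow p-subgroup of G is non-cyclic. -/
open Subgroup

section Aux

variable {G : Type} [Group G]

lemma myZpowersIsCyclic (z : G) : IsCyclic ↥(zpowers z) := by
  refine ⟨⟨⟨z, mem_zpowers z⟩, fun x => ?_⟩⟩
  obtain ⟨k, hk⟩ := mem_zpowers_iff.mp x.2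
  exact ⟨k, Subtype.ext (by simpa using hk)⟩

/-- If two elements of a subgroup `P` lie in a common cyclic subgroup of `G`,
they lie in a common cyclic subgroup generated by an element of `P`. -/
lemma myCommonCyclicIn (P : Subgroup G) {a b z : G} (ha : a ∈ P) (hb : b ∈ P)
    (haz : a ∈ zpowers z) (hbz : b ∈ zpowers z) :
    ∃ w ∈ P, a ∈ zpowers w ∧ b ∈ zpowers w := by
  haveI : IsCyclic ↥(zpowers z) := myZpowersIsCyclic z
  haveI : IsCyclic ↥(zpowers z ⊓ P) := Subgroup.isCyclic_of_le inf_le_left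
  obtain ⟨g, hg⟩ := IsCyclic.exists_generator (α := ↥(zpowers z ⊓ P))
  refine ⟨(g : G), g.2.2, ?_, ?_⟩
  · obtain ⟨k, hk⟩ := mem_zpowers_iff.mp (hg ⟨a, ⟨haz, ha⟩⟩)
    exact mem_zpowers_iff.mpr ⟨k, by simpa using congrArg Subtype.val hk⟩
  · obtain ⟨k, hk⟩ := mem_zpowers_iff.mp (hg ⟨b, ⟨hbz, hb⟩⟩)
    exact mem_zpowers_iff.mpr ⟨k, by simpa using congrArg Subtype.val hk⟩

/-- `w` generates a maximal cyclic subgroup among those generated by elements of `P`. -/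
def MyMaxZ (P : Subgroup G) (w : G) : Prop :=
  w ∈ P ∧ ∀ u ∈ P, w ∈ zpowers u → zpowers u = zpowers w

lemma myExistsMaxZ [Fintype G] (P : Subgroup G) {g : G} (hg : g ∈ P) :
    ∃ w, MyMaxZ P w ∧ g ∈ zpowers w := by
  classical
  have hne : (Finset.univ.filter fun w : G => w ∈ P ∧ g ∈ zpowers w).Nonempty :=
    ⟨g, by simp [hg, mem_zpowers g]⟩
  obtain ⟨w, hw, hmax⟩ := Finset.exists_max_image _ (fun w => Nat.card ↥(zpowers w)) hne
  simp only [Finset.mem_filter, Finset.mem_univ, true_and] at hw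
  refine ⟨w, ⟨hw.1, fun u hu hwu => ?_⟩, hw.2⟩
  have hle : zpowers w ≤ zpowers u := zpowers_le.mpr hwu
  have hu' : u ∈ Finset.univ.filter fun w : G => w ∈ P ∧ g ∈ zpowers w := by
    simp only [Finset.mem_filter, Finset.mem_univ, true_and]
    exact ⟨hu, hle hw.2⟩
  exact (Subgroup.eq_of_le_of_card_ge hle (hmax u hu')).symm

end Aux

section Aux2

variable {G : Type} [Group G]

lemma myMaxZ_ne_one {P : Subgroup G} {w : G} (hw : MyMaxZ P w) (hP : ¬ IsCyclic ↥P) :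
    w ≠ 1 := by
  rintro rfl
  apply hP
  have : P ≤ ⊥ := by
    intro u hu
    have := hw.2 u hu (one_mem _)
    rw [Subgroup.zpowers_one_eq_bot] at this
    rw [Subgroup.mem_bot]
    simpa [this] using mem_zpowers u
  have hPbot : P = ⊥ := le_antisymm this bot_le
  rw [hPbot]
  infer_instance

lemma myMaxZ_incompat {P : Subgroup G} {a b : G} (ha : MyMaxZ P a) (hb : MyMaxZ P b)
    (hne : zpowers a ≠ zpowers b) (z : G) : ¬ (a ∈ zpowers z ∧ b ∈ zpowers z) := by
  rintro ⟨haz, hbz⟩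
  obtain ⟨w, hwP, haw, hbw⟩ := myCommonCyclicIn P ha.1 hb.1 haz hbz
  exact hne ((ha.2 w hwP haw).symm.trans (hb.2 w hwP hbw))

lemma myExistsThree [Fintype G] (P : Subgroup G) (hP : ¬ IsCyclic ↥P) :
    ∃ a b c : G, MyMaxZ P a ∧ MyMaxZ P b ∧ MyMaxZ P c ∧
      zpowers a ≠ zpowers b ∧ zpowers a ≠ zpowers c ∧ zpowers b ≠ zpowers c := by
  obtain ⟨a, haM, -⟩ := myExistsMaxZ P P.one_mem
  -- a second maximal cyclic subgroup
  have hb : ∃ b, MyMaxZ P b ∧ zpowers b ≠ zpowers a := by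
    by_contra hcon
    push_neg at hcon
    apply hP
    have hle : P ≤ zpowers a := by
      intro g hg
      obtain ⟨w, hwM, hgw⟩ := myExistsMaxZ P hg
      rw [← hcon w hwM]
      exact hgw
    have : P = zpowers a := le_antisymm hle (zpowers_le.mpr haM.1)
    rw [this]
    exact myZpowersIsCyclic a
  obtain ⟨b, hbM, hba⟩ := hb
  have hc : ∃ c, MyMaxZ P c ∧ zpowers c ≠ zpowers a ∧ zpowers c ≠ zpowers b := by
    by_contra hcon
    push_neg at hcon
    -- then P ⊆ zpowers a ∪ zpowers b; standard union-of-two-subgroups argument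
    have hcover : ∀ g ∈ P, g ∈ zpowers a ∨ g ∈ zpowers b := by
      intro g hg
      obtain ⟨w, hwM, hgw⟩ := myExistsMaxZ P hg
      rcases eq_or_ne (zpowers w) (zpowers a) with h | h
      · exact Or.inl (h ▸ hgw)
      · exact Or.inr ((hcon w hwM h) ▸ hgw)
    have hanb : a ∉ zpowers b := by
      intro hab
      exact hba ((haM.2 b hbM.1 hab).symm ▸ rfl)
    have hbna : b ∉ zpowers a := by
      intro hba'
      exact hba (hbM.2 a haM.1 hba').symm
    rcases hcover (a * b) (P.mul_mem haM.1 hbM.1) with h | h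
    · exact hbna (by simpa using (zpowers a).mul_mem ((zpowers a).inv_mem (mem_zpowers a)) h)
    · exact hanb (by simpa using (zpowers b).mul_mem h ((zpowers b).inv_mem (mem_zpowers b)))
  obtain ⟨c, hcM, hca, hcb⟩ := hc
  exact ⟨a, b, c, haM, hbM, hcM, Ne.symm hba, Ne.symm hca, Ne.symm hcb⟩

end Aux2

section Pi

lemma myIsCyclicPi {ι : Type} [Fintype ι] (H : ι → Type) [∀ i, Group (H i)]
    [∀ i, Finite (H i)]
    (hcyc : ∀ i, IsCyclic (H i))
    (hcop : Pairwise fun i j => Nat.Coprime (Nat.card (H i)) (Nat.card (H j))) :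
    IsCyclic (∀ i, H i) := by
  classical
  choose g hg using fun i => (hcyc i).exists_generator
  set x : ∀ i, H i := g with hx
  have hdvd : ∀ i, Nat.card (H i) ∣ orderOf x := by
    intro i
    rw [← orderOf_eq_card_of_forall_mem_zpowers (hg i)]
    have : x ^ orderOf x = 1 := pow_orderOf_eq_one x
    have := congrFun this i
    simp only [Pi.pow_apply, Pi.one_apply] at this
    exact orderOf_dvd_of_pow_eq_one this
  have hcard : Nat.card (∀ i, H i) ∣ orderOf x := by
    rw [Nat.card_pi]
    have : ((∏ i, Nat.card (H i) : ℕ) : ℤ) ∣ ((orderOf x : ℕ) : ℤ) := by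
      push_cast
      exact Finset.prod_dvd_of_coprime
        (fun i _ j _ hij => Nat.isCoprime_iff_coprime.mpr (hcop hij))
        (fun i _ => Int.natCast_dvd_natCast.mpr (hdvd i))
    exact_mod_cast this
  have : orderOf x = Nat.card (∀ i, H i) :=
    Nat.dvd_antisymm (orderOf_dvd_natCard x) hcard
  exact isCyclic_of_orderOf_eq_card x this

end Pi

section SylowCyclic

variable (G : Type) [Group G] [Fintype G]

lemma myIsCyclicOfSylowCyclic (hnil : Group.IsNilpotent G)
    (h : ∀ (p : ℕ) (_ : Fact p.Prime) (Q : Sylow p G), IsCyclic ↥(Q : Subgroup G)) :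
    IsCyclic G := by
  classical
  have hnorm : ∀ (p : ℕ) (_hp : Fact p.Prime) (P : Sylow p G), (↑P : Subgroup G).Normal :=
    (isNilpotent_of_finite_tfae.out 0 3).mp hnil
  obtain ⟨e⟩ : Nonempty
      ((∀ p : (Nat.card G).primeFactors, ∀ P : Sylow p G, (↑P : Subgroup G)) ≃* G) :=
    (isNilpotent_of_finite_tfae.out 0 4).mp hnil
  have hcyc : IsCyclic (∀ p : (Nat.card G).primeFactors, ∀ P : Sylow p G, (↑P : Subgroup G)) := by
    apply myIsCyclicPi
    · rintro ⟨p, hp⟩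
      haveI : Fact p.Prime := ⟨Nat.prime_of_mem_primeFactors hp⟩
      letI : Unique (Sylow p G) := Sylow.unique_of_normal _ (hnorm p ‹_› default)
      haveI : IsCyclic ↥((default : Sylow p G) : Subgroup G) := h p ‹_› _
      exact isCyclic_of_surjective
        (MulEquiv.piUnique fun P : Sylow p G => ↥(P : Subgroup G)).symm
        (MulEquiv.surjective _)
    · rintro ⟨p₁, hp₁⟩ ⟨p₂, hp₂⟩ hne
      haveI : Fact p₁.Prime := ⟨Nat.prime_of_mem_primeFactors hp₁⟩
      haveI : Fact p₂.Prime := ⟨Nat.prime_of_mem_primeFactors hp₂⟩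
      letI : Unique (Sylow p₁ G) := Sylow.unique_of_normal _ (hnorm p₁ ‹_› default)
      letI : Unique (Sylow p₂ G) := Sylow.unique_of_normal _ (hnorm p₂ ‹_› default)
      have hne' : p₁ ≠ p₂ := by simpa using hne
      have e₁ := (MulEquiv.piUnique fun P : Sylow p₁ G => ↥(P : Subgroup G)).toEquiv
      have e₂ := (MulEquiv.piUnique fun P : Sylow p₂ G => ↥(P : Subgroup G)).toEquiv
      rw [Nat.card_congr e₁, Nat.card_congr e₂, Sylow.card_eq_multiplicity,
        Sylow.card_eq_multiplicity]
      exact Nat.Coprime.pow _ _ ((Nat.coprime_primes (Fact.out) (Fact.out)).mpr hne')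
  exact isCyclic_of_surjective e.toMonoidHom e.surjective

end SylowCyclic
section Claw

lemma myLineGraphClawFree {V : Type} {Γ : SimpleGraph V} (h : IsLineGraph Γ)
    {v a b c : V} (hva : Γ.Adj v a) (hvb : Γ.Adj v b) (hvc : Γ.Adj v c)
    (hab : ¬ Γ.Adj a b) (hac : ¬ Γ.Adj a c) (hbc : ¬ Γ.Adj b c)
    (h1 : a ≠ b) (h2 : a ≠ c) (h3 : b ≠ c) : False := by
  obtain ⟨W, H, ⟨f⟩⟩ := h
  have key : ∀ {u w : V}, u ≠ w → ¬ Γ.Adj u w →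
      ∀ t : W, t ∈ (↑(f u) : Sym2 W) → t ∈ (↑(f w) : Sym2 W) → False := by
    intro u w hne hnadj t ht1 ht2
    apply hnadj
    rw [← f.map_adj_iff]
    exact SimpleGraph.lineGraph_adj_iff_exists.mpr
      ⟨fun hh => hne (f.toEquiv.injective (Subtype.ext_iff.mpr (Subtype.ext_iff.mp hh))), t, ht1, ht2⟩
  obtain ⟨⟨x, y⟩, hxy⟩ := Quot.exists_rep (↑(f v) : Sym2 W)
  obtain ⟨-, ta, hta1, hta2⟩ := SimpleGraph.lineGraph_adj_iff_exists.mp (f.map_adj_iff.mpr hva)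
  obtain ⟨-, tb, htb1, htb2⟩ := SimpleGraph.lineGraph_adj_iff_exists.mp (f.map_adj_iff.mpr hvb)
  obtain ⟨-, tc, htc1, htc2⟩ := SimpleGraph.lineGraph_adj_iff_exists.mp (f.map_adj_iff.mpr hvc)
  rw [← hxy] at hta1 htb1 htc1
  rw [show Quot.mk (Sym2.Rel W) (x, y) = s(x, y) from rfl, Sym2.mem_iff] at hta1 htb1 htc1
  rcases hta1 with rfl | rfl <;> rcases htb1 with rfl | rfl <;> rcases htc1 with rfl | rfl <;>
    first
    | exact key h1 hab _ hta2 htb2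
    | exact key h2 hac _ hta2 htc2
    | exact key h3 hbc _ htb2 htc2

end Claw

section Coprime

variable {G : Type} [Group G]

lemma myMemZpowersMulLeft {a c : G} (hcomm : Commute a c)
    (hcop : Nat.Coprime (orderOf a) (orderOf c)) : a ∈ zpowers (a * c) := by
  obtain ⟨k, hk1, hk0⟩ := Nat.chineseRemainder hcop 1 0
  refine mem_zpowers_iff.mpr ⟨(k : ℤ), ?_⟩
  rw [zpow_natCast, hcomm.mul_pow]
  have hc : c ^ k = 1 := orderOf_dvd_iff_pow_eq_one.mp (Nat.modEq_zero_iff_dvd.mp hk0)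
  have ha : a ^ k = a ^ 1 := pow_eq_pow_iff_modEq.mpr hk1
  rw [hc, ha, pow_one, mul_one]

lemma myMemZpowersMulRight {a c : G} (hcomm : Commute a c)
    (hcop : Nat.Coprime (orderOf a) (orderOf c)) : c ∈ zpowers (a * c) := by
  obtain ⟨k, hk0, hk1⟩ := Nat.chineseRemainder hcop 0 1
  refine mem_zpowers_iff.mpr ⟨(k : ℤ), ?_⟩
  rw [zpow_natCast, hcomm.mul_pow]
  have ha : a ^ k = 1 := orderOf_dvd_iff_pow_eq_one.mp (Nat.modEq_zero_iff_dvd.mp hk0)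
  have hc : c ^ k = c ^ 1 := pow_eq_pow_iff_modEq.mpr hk1
  rw [hc, ha, pow_one, one_mul]

end Coprime


/-- if `G` is a finite non-cyclic nilpotent group whose proper enhanced power
graph is a line graph, then exactly one prime dividing `|G|` has a non-cyclic Sylow
subgroup. -/
theorem exists_unique_noncyclic_sylow (G : Type) [Group G] [Fintype G]
    (hnc : ¬ IsCyclic G) (hnil : Group.IsNilpotent G)
    (h : IsLineGraph (properEnhancedPowerGraph G)) :
    ∃! p : ℕ, p.Prime ∧ p ∣ Nat.card G ∧
      ∃ Q : Sylow p G, ¬ IsCyclic ↥(Q : Subgroup G) := by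
  classical
  have hnorm : ∀ (p : ℕ) (_hp : Fact p.Prime) (P : Sylow p G), (↑P : Subgroup G).Normal :=
    (isNilpotent_of_finite_tfae.out 0 3).mp hnil
  have hex : ∃ p : ℕ, p.Prime ∧ ∃ Q : Sylow p G, ¬ IsCyclic ↥(Q : Subgroup G) := by
    by_contra hcon
    push_neg at hcon
    exact hnc (myIsCyclicOfSylowCyclic G hnil fun p hp Q => hcon p hp.1 Q)
  obtain ⟨p, hp, Q, hQ⟩ := hex
  haveI : Fact p.Prime := ⟨hp⟩
  have hpdvd : p ∣ Nat.card G := by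
    by_contra hnd
    have h0 : (Nat.card G).factorization p = 0 := Nat.factorization_eq_zero_of_not_dvd hnd
    have hcard : Nat.card ↥(Q : Subgroup G) = 1 := by
      rw [Sylow.card_eq_multiplicity, h0, pow_zero]
    haveI : Subsingleton ↥(Q : Subgroup G) := Finite.card_le_one_iff_subsingleton.mp hcard.le
    exact hQ inferInstance
  refine ⟨p, ⟨hp, hpdvd, Q, hQ⟩, ?_⟩
  rintro q ⟨hq, hqdvd, R, hR⟩
  by_contra hne
  haveI : Fact q.Prime := ⟨hq⟩
  exfalso
  set P : Subgroup G := (Q : Subgroup G) with hPdef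
  set S : Subgroup G := (R : Subgroup G) with hSdef
  have hdisj : Disjoint S P := IsPGroup.disjoint_of_ne q p hne _ _ R.isPGroup' Q.isPGroup'
  have hcomm : ∀ (x y : G), x ∈ S → y ∈ P → Commute x y :=
    Subgroup.commute_of_normal_of_disjoint S P (hnorm q ‹_› R) (hnorm p ‹_› Q) hdisj
  obtain ⟨a, b, c, haM, hbM, hcM, hab, hac, hbc⟩ := myExistsThree P hQ
  obtain ⟨d, e, -, hdM, heM, -, hde, -, -⟩ := myExistsThree S hR
  have ha1 : a ≠ 1 := myMaxZ_ne_one haM hQ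
  have hb1 : b ≠ 1 := myMaxZ_ne_one hbM hQ
  have hc1 : c ≠ 1 := myMaxZ_ne_one hcM hQ
  -- orders
  have horder : ∀ x ∈ P, ∀ y ∈ S, Nat.Coprime (orderOf y) (orderOf x) := by
    intro x hx y hy
    obtain ⟨k, hk⟩ := IsPGroup.iff_orderOf.mp Q.isPGroup' ⟨x, hx⟩
    obtain ⟨l, hl⟩ := IsPGroup.iff_orderOf.mp R.isPGroup' ⟨y, hy⟩
    rw [Subgroup.orderOf_mk] at hk hl
    rw [hk, hl]
    exact Nat.Coprime.pow _ _ ((Nat.coprime_primes hq hp).mpr hne)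
  -- d is distinct from elements of P other than 1
  have hdne : ∀ x ∈ P, x ≠ 1 → d ≠ x := by
    rintro x hx hx1 rfl
    exact hx1 (Subgroup.mem_bot.mp (hdisj.le_bot ⟨hdM.1, hx⟩))
  -- adjacency of d with nontrivial elements of P
  have hadj : ∀ x ∈ P, x ≠ 1 → (enhancedPowerGraph G).Adj d x := by
    intro x hx hx1
    refine ⟨hdne x hx hx1, x * d, ?_, ?_⟩
    · exact myMemZpowersMulRight ((hcomm d x hdM.1 hx).symm) ((horder x hx d hdM.1).symm)
    · exact myMemZpowersMulLeft ((hcomm d x hdM.1 hx).symm) ((horder x hx d hdM.1).symm)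
  have hnadj : ∀ {x y : G}, MyMaxZ P x → MyMaxZ P y → zpowers x ≠ zpowers y →
      ¬ (enhancedPowerGraph G).Adj x y := by
    rintro x y hx hy hxy ⟨-, z, hxz, hyz⟩
    exact myMaxZ_incompat hx hy hxy z ⟨hxz, hyz⟩
  have hnadjS : ¬ (enhancedPowerGraph G).Adj d e := by
    rintro ⟨-, z, hdz, hez⟩
    exact myMaxZ_incompat hdM heM hde z ⟨hdz, hez⟩
  have habne : a ≠ b := fun hh => hab (hh ▸ rfl)
  have hacne : a ≠ c := fun hh => hac (hh ▸ rfl)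
  have hbcne : b ≠ c := fun hh => hbc (hh ▸ rfl)
  have hdene : d ≠ e := fun hh => hde (hh ▸ rfl)
  have nda : ¬ IsDominatingVertex (enhancedPowerGraph G) a := fun hd =>
    hnadj haM hbM hab (hd b (Ne.symm habne))
  have ndb : ¬ IsDominatingVertex (enhancedPowerGraph G) b := fun hd =>
    hnadj hbM haM (Ne.symm hab) (hd a habne)
  have ndc : ¬ IsDominatingVertex (enhancedPowerGraph G) c := fun hd =>
    hnadj hcM haM (Ne.symm hac) (hd a hacne)
  have ndd : ¬ IsDominatingVertex (enhancedPowerGraph G) d := fun hd =>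
    hnadjS (hd e (Ne.symm hdene))
  exact myLineGraphClawFree h
    (v := ⟨d, ndd⟩) (a := ⟨a, nda⟩) (b := ⟨b, ndb⟩) (c := ⟨c, ndc⟩)
    (hadj a haM.1 ha1) (hadj b hbM.1 hb1) (hadj c hcM.1 hc1)
    (fun hh => hnadj haM hbM hab hh)
    (fun hh => hnadj haM hcM hac hh)
    (fun hh => hnadj hbM hcM hbc hh)
    (fun hh => habne (congrArg Subtype.val hh))
    (fun hh => hacne (congrArg Subtype.val hh))
    (fun hh => hbcne (congrArg Subtype.val hh))
end

section
/- Let G be a finite cyclic group. Then the power graph P(G) is the complement of a line graph of some graph if and only if G ≅ Z_6 or G ≅ Z_{p^α} for some prime p and α ≥ 0. -/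
open Subgroup

lemma mem_zpowers_iff_orderOf_dvd {G : Type} [Group G] [Fintype G] (hc : IsCyclic G)
    (x y : G) : x ∈ zpowers y ↔ orderOf x ∣ orderOf y := by
  classical
  haveI := hc
  constructor
  · intro hm
    obtain ⟨k, hk⟩ := (isOfFinOrder_of_finite y).mem_powers_iff_mem_zpowers.mpr hm
    exact hk ▸ orderOf_pow_dvd k
  · intro hdvd
    have hd : 0 < orderOf y := orderOf_pos y
    set d := orderOf y with hdef
    set S : Finset G := Finset.univ.filter (fun b => b ^ d = 1) with hS
    set T : Finset G := Finset.univ.filter (fun b => b ∈ zpowers y) with hT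
    have hTS : T ⊆ S := by
      intro z hz
      simp only [hT, Finset.mem_filter, Finset.mem_univ, true_and] at hz
      obtain ⟨n, hn⟩ := (isOfFinOrder_of_finite y).mem_powers_iff_mem_zpowers.mpr hz
      simp only [hS, Finset.mem_filter, Finset.mem_univ, true_and]
      rw [← hn, ← pow_mul, mul_comm, pow_mul, pow_orderOf_eq_one, one_pow]
    have hcardS : S.card ≤ d := IsCyclic.card_pow_eq_one_le hd
    have hcardT : T.card = d := by
      rw [hT, ← Fintype.card_subtype]
      exact Fintype.card_zpowers
    have : T = S := Finset.eq_of_subset_of_card_le hTS (by omega)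
    have hx : x ∈ S := by
      simp only [hS, Finset.mem_filter, Finset.mem_univ, true_and]
      exact orderOf_dvd_iff_pow_eq_one.mp hdvd
    rw [← this, hT] at hx
    simpa using hx

lemma noClaw_of_isLineGraph {V : Type} {Γ : SimpleGraph V} (h : IsLineGraph Γ)
    {c a b d : V} (hca : Γ.Adj c a) (hcb : Γ.Adj c b) (hcd : Γ.Adj c d)
    (hab : ¬Γ.Adj a b) (had : ¬Γ.Adj a d) (hbd : ¬Γ.Adj b d)
    (h1 : a ≠ b) (h2 : a ≠ d) (h3 : b ≠ d) : False := by
  obtain ⟨W, H, ⟨φ⟩⟩ := h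
  have key : ∀ x y : V, ¬Γ.Adj x y → x ≠ y →
      ∀ w : W, w ∈ (φ x : Sym2 W) → w ∈ (φ y : Sym2 W) → False := by
    intro x y hxy hne w hwx hwy
    apply hxy
    rw [← φ.map_rel_iff]
    exact ⟨fun hh => hne (φ.injective hh), ⟨w, hwx, hwy⟩⟩
  have hadj : ∀ x : V, Γ.Adj c x → ∃ w : W, w ∈ (φ c : Sym2 W) ∧ w ∈ (φ x : Sym2 W) := by
    intro x hx
    have := φ.map_rel_iff.mpr hx
    obtain ⟨hne, w, hw1, hw2⟩ := SimpleGraph.lineGraph_adj_iff_exists.mp this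
    exact ⟨w, hw1, hw2⟩
  obtain ⟨wa, hwa, hwa'⟩ := hadj a hca
  obtain ⟨wb, hwb, hwb'⟩ := hadj b hcb
  obtain ⟨wd, hwd, hwd'⟩ := hadj d hcd
  obtain ⟨u, v, huv⟩ : ∃ u v, (φ c : Sym2 W) = s(u, v) := by
    induction (φ c : Sym2 W) using Sym2.ind with
    | _ x y => exact ⟨x, y, rfl⟩
  rw [huv, Sym2.mem_iff] at hwa hwb hwd
  rcases hwa with rfl | rfl <;> rcases hwb with h5 | h5 <;> rcases hwd with h6 | h6 <;>
    first
      | exact key a b hab h1 wa hwa' (h5 ▸ hwb')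
      | exact key a d had h2 wa hwa' (h6 ▸ hwd')
      | exact key b d hbd h3 wb hwb' (by rw [h5.trans h6.symm]; exact hwd')

/-- The matching graph on `V × Bool`. -/
def matchingGraph (V : Type) : SimpleGraph (V × Bool) where
  Adj x y := x.1 = y.1 ∧ x.2 ≠ y.2
  symm := ⟨by rintro ⟨a, b⟩ ⟨c, d⟩ ⟨h1, h2⟩; exact ⟨h1.symm, h2.symm⟩⟩
  loopless := ⟨by rintro ⟨a, b⟩ ⟨h1, h2⟩; exact h2 rfl⟩

lemma bot_isLineGraph (V : Type) : IsLineGraph (⊥ : SimpleGraph V) := by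
  refine ⟨V × Bool, matchingGraph V, ⟨?_⟩⟩
  have hmem : ∀ v : V, s((v, false), (v, true)) ∈ (matchingGraph V).edgeSet := by
    intro v; exact ⟨rfl, by simp⟩
  have hinj : Function.Injective (fun v : V => (⟨s((v, false), (v, true)), hmem v⟩ :
      (matchingGraph V).edgeSet)) := by
    intro x y h
    simp only [Subtype.mk_eq_mk, Sym2.eq, Sym2.rel_iff', Prod.mk.injEq] at h
    rcases h with ⟨⟨h, -⟩, -⟩ | ⟨⟨-, h⟩, -⟩ <;> simp_all
  have hsurj : Function.Surjective (fun v : V => (⟨s((v, false), (v, true)), hmem v⟩ :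
      (matchingGraph V).edgeSet)) := by
    rintro ⟨e, he⟩
    induction e using Sym2.ind with
    | _ x y =>
      obtain ⟨h1, h2⟩ := he
      refine ⟨x.1, ?_⟩
      ext : 1
      simp only
      rcases x with ⟨a, b⟩; rcases y with ⟨c, d⟩
      simp only at h1 h2
      subst h1
      rcases b <;> rcases d <;> simp_all [Sym2.eq_swap]
  refine ⟨Equiv.ofBijective _ ⟨hinj, hsurj⟩, ?_⟩
  intro x y
  simp only [Equiv.ofBijective_apply, SimpleGraph.bot_adj, iff_false,
    SimpleGraph.lineGraph_adj_iff_exists]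
  rintro ⟨hne, w, hw1, hw2⟩
  change w ∈ s((x, false), (x, true)) at hw1
  change w ∈ s((y, false), (y, true)) at hw2
  simp only [Sym2.mem_iff] at hw1 hw2
  have hx1 : w.1 = x := by rcases hw1 with h | h <;> rw [h]
  have hx2 : w.1 = y := by rcases hw2 with h | h <;> rw [h]
  have hxy : x = y := hx1.symm.trans hx2
  exact hne (by subst hxy; rfl)

lemma isLineGraph_of_iso {V V' : Type} {Γ : SimpleGraph V} {Γ' : SimpleGraph V'}
    (e : Γ ≃g Γ') (h : IsLineGraph Γ') : IsLineGraph Γ := by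
  obtain ⟨W, H, ⟨φ⟩⟩ := h
  exact ⟨W, H, ⟨e.trans φ⟩⟩

def isoCompl {V V' : Type} {Γ : SimpleGraph V} {Γ' : SimpleGraph V'} (e : Γ ≃g Γ') :
    Γᶜ ≃g Γ'ᶜ where
  toEquiv := e.toEquiv
  map_rel_iff' := by
    intro x y
    exact and_congr e.toEquiv.injective.ne_iff (not_congr e.map_rel_iff)

lemma mem_zpowers_map {G G' : Type} [Group G] [Group G'] (e : G ≃* G') (x y : G) :
    e x ∈ zpowers (e y) ↔ x ∈ zpowers y := by
  constructor
  · rintro ⟨k, hk⟩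
    refine ⟨k, e.injective ?_⟩
    rw [map_zpow]
    exact hk
  · rintro ⟨k, hk⟩
    refine ⟨k, ?_⟩
    show e y ^ k = e x
    rw [← map_zpow]
    exact congrArg e hk

/-- decidable membership in zpowers in a finite group -/
def powerGraphIso {G G' : Type} [Group G] [Group G'] (e : G ≃* G') :
    powerGraph G ≃g powerGraph G' where
  toEquiv := e.toEquiv
  map_rel_iff' := by
    intro x y
    exact and_congr e.toEquiv.injective.ne_iff
      (or_congr (mem_zpowers_map e x y) (mem_zpowers_map e y x))

lemma mem_zpowers_iff_exists_fin {G : Type} [Group G] [Fintype G] (x y : G) :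
    x ∈ zpowers y ↔ ∃ k : Fin (Fintype.card G), y ^ (k : ℕ) = x := by
  constructor
  · intro h
    obtain ⟨n, hn⟩ := (isOfFinOrder_of_finite y).mem_powers_iff_mem_zpowers.mpr h
    refine ⟨⟨n % orderOf y, lt_of_lt_of_le (Nat.mod_lt _ (orderOf_pos y)) orderOf_le_card_univ⟩, ?_⟩
    simpa [pow_mod_orderOf] using hn
  · rintro ⟨k, hk⟩
    exact ⟨(k : ℕ), by simpa using hk⟩

instance zpowersDecidable {G : Type} [Group G] [Fintype G] [DecidableEq G] (x y : G) :
    Decidable (x ∈ zpowers y) :=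
  decidable_of_iff _ (mem_zpowers_iff_exists_fin x y).symm

instance powerGraphDecidable {G : Type} [Group G] [Fintype G] [DecidableEq G] :
    DecidableRel (powerGraph G).Adj := fun x y =>
  (inferInstance : Decidable (x ≠ y ∧ (x ∈ zpowers y ∨ y ∈ zpowers x)))

def H6edges : Finset (Sym2 (Fin 10)) := {s(0,1), s(1,2), s(2,3), s(4,5), s(6,7), s(8,9)}

def H6Adj (x y : Fin 10) : Prop := s(x, y) ∈ H6edges

instance : DecidableRel H6Adj := fun _ _ => Finset.decidableMem _ _

def H6 : SimpleGraph (Fin 10) where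
  Adj := H6Adj
  symm := ⟨by intro x y h; unfold H6Adj at *; rwa [Sym2.eq_swap]⟩
  loopless := ⟨by intro x; revert x; unfold H6Adj; decide⟩

instance : DecidableRel H6.Adj := fun x y => (inferInstance : Decidable (H6Adj x y))

instance {W : Type} (H : SimpleGraph W) [Fintype W] [DecidableEq W] [DecidableRel H.Adj] :
    DecidableRel H.lineGraph.Adj := fun e1 e2 =>
  decidable_of_iff _ (SimpleGraph.lineGraph_adj_iff_exists).symm

abbrev M6 := Multiplicative (ZMod 6)

def f6 (x : ZMod 6) : Sym2 (Fin 10) :=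
  ![s(4,5), s(6,7), s(0,1), s(1,2), s(2,3), s(8,9)] ⟨x.val, x.val_lt⟩

lemma f6_mem (x : M6) : f6 x.toAdd ∈ H6.edgeSet := by
  revert x; decide

def F6 (x : M6) : H6.edgeSet := ⟨f6 x.toAdd, f6_mem x⟩

lemma F6_bij : Function.Bijective F6 := by
  rw [Fintype.bijective_iff_injective_and_card]
  constructor
  · intro x y h
    have : f6 x.toAdd = f6 y.toAdd := congrArg Subtype.val h
    revert this; revert x y; decide
  · decide

lemma z6_compl_isLineGraph : IsLineGraph (powerGraph M6)ᶜ := by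
  refine ⟨Fin 10, H6, ⟨⟨Equiv.ofBijective F6 F6_bij, ?_⟩⟩⟩
  intro x y
  show H6.lineGraph.Adj (F6 x) (F6 y) ↔ (powerGraph M6)ᶜ.Adj x y
  revert x y
  decide

lemma arith_lemma {n : ℕ} (hn : n ≠ 0) (h6 : n ≠ 6)
    (hnp : ¬∃ p α : ℕ, p.Prime ∧ n = p ^ α) :
    ∃ p q e : ℕ, p.Prime ∧ q.Prime ∧ p ≠ q ∧ q ∣ n ∧ 4 ≤ p ^ e ∧ p ^ e ∣ n := by
  have hn1 : n ≠ 1 := fun h => hnp ⟨2, 0, Nat.prime_two, by omega⟩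
  have hn2 : 2 ≤ n := by omega
  have hnpp : ¬ IsPrimePow n := by
    rintro ⟨p, k, hp, hk, rfl⟩
    exact hnp ⟨p, k, hp.nat_prime, rfl⟩
  have hcard : n.primeFactors.Nonempty := Nat.nonempty_primeFactors.mpr (by omega)
  have hcard2 : 1 < n.primeFactors.card := by
    by_contra hcon
    push_neg at hcon
    have h1 : 1 ≤ n.primeFactors.card := Finset.card_pos.mpr hcard
    exact hnpp (isPrimePow_iff_card_primeFactors_eq_one.mpr (by omega))
  obtain ⟨p, hpmem, q, hqmem, hpq⟩ := Finset.one_lt_card.mp hcard2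
  have hp : p.Prime := Nat.prime_of_mem_primeFactors hpmem
  have hq : q.Prime := Nat.prime_of_mem_primeFactors hqmem
  have hpd : p ∣ n := Nat.dvd_of_mem_primeFactors hpmem
  have hqd : q ∣ n := Nat.dvd_of_mem_primeFactors hqmem
  have hfp : 1 ≤ n.factorization p := (Nat.Prime.factorization_pos_of_dvd hp hn hpd)
  have hfq : 1 ≤ n.factorization q := (Nat.Prime.factorization_pos_of_dvd hq hn hqd)
  by_cases h4p : 4 ≤ p ^ (n.factorization p)
  · exact ⟨p, q, n.factorization p, hp, hq, hpq, hqd, h4p, Nat.ordProj_dvd n p⟩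
  by_cases h4q : 4 ≤ q ^ (n.factorization q)
  · exact ⟨q, p, n.factorization q, hq, hp, hpq.symm, hpd, h4q, Nat.ordProj_dvd n q⟩
  -- now p^ep, q^eq ≤ 3 hence p,q ∈ {2,3}, exponents 1
  have hple : p ≤ p ^ n.factorization p := Nat.le_self_pow (by omega) p
  have hqle : q ≤ q ^ n.factorization q := Nat.le_self_pow (by omega) q
  have hp3 : p ≤ 3 := by omega
  have hq3 : q ≤ 3 := by omega
  have hp2 : 2 ≤ p := hp.two_le
  have hq2 : 2 ≤ q := hq.two_le
  have hp23 : p = 2 ∨ p = 3 := by omega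
  have hq23 : q = 2 ∨ q = 3 := by omega
  by_cases hr : ∃ r ∈ n.primeFactors, r ≠ p ∧ r ≠ q
  · obtain ⟨r, hrmem, hrp, hrq⟩ := hr
    have hrprime : r.Prime := Nat.prime_of_mem_primeFactors hrmem
    have hr5 : 5 ≤ r := by
      by_contra hcon
      push_neg at hcon
      have h2r := hrprime.two_le
      interval_cases r
      · omega
      · omega
      · exact absurd hrprime (by norm_num)
    exact ⟨r, p, 1, hrprime, hp, hrp, hpd, by rw [pow_one]; omega,
      by rw [pow_one]; exact Nat.dvd_of_mem_primeFactors hrmem⟩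
  · exfalso
    push_neg at hr
    have hsub : n.primeFactors = {p, q} := by
      apply Finset.Subset.antisymm
      · intro r hrm
        simp only [Finset.mem_insert, Finset.mem_singleton]
        by_contra hcon
        push_neg at hcon
        exact hcon.2 (hr r hrm hcon.1)
      · intro r hrm
        simp only [Finset.mem_insert, Finset.mem_singleton] at hrm
        rcases hrm with rfl | rfl <;> assumption
    have hep : n.factorization p = 1 := by
      by_contra hcon
      have h2 : 2 ≤ n.factorization p := by omega
      have : 2 ^ 2 ≤ p ^ n.factorization p :=
        le_trans (Nat.pow_le_pow_right (by omega) h2) (Nat.pow_le_pow_left hp2 _)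
      omega
    have heq : n.factorization q = 1 := by
      by_contra hcon
      have h2 : 2 ≤ n.factorization q := by omega
      have : 2 ^ 2 ≤ q ^ n.factorization q :=
        le_trans (Nat.pow_le_pow_right (by omega) h2) (Nat.pow_le_pow_left hq2 _)
      omega
    have hprod := Nat.factorization_prod_pow_eq_self hn
    rw [Finsupp.prod, Nat.support_factorization, hsub, Finset.prod_pair hpq, hep, heq,
      pow_one, pow_one] at hprod
    rcases hp23 with rfl | rfl <;> rcases hq23 with rfl | rfl <;> omega

lemma claw_case {G : Type} [Group G] [Fintype G] (hc : IsCyclic G) {p q e : ℕ}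
    (hp : p.Prime) (hq : q.Prime) (hpq : p ≠ q) (hqn : q ∣ Fintype.card G)
    (h4 : 4 ≤ p ^ e) (hpe : p ^ e ∣ Fintype.card G) :
    ¬ IsLineGraph (powerGraph G)ᶜ := by
  intro hlg
  obtain ⟨g, hg⟩ := hc.exists_generator
  have hn0 : Fintype.card G ≠ 0 := Fintype.card_ne_zero
  set n := Fintype.card G with hn
  have hgord : orderOf g = n := by
    rw [orderOf_eq_card_of_forall_mem_zpowers hg, Nat.card_eq_fintype_card]
  have hordpow : ∀ m : ℕ, m ∣ n → orderOf (g ^ (n / m)) = m := by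
    intro m hm
    rw [orderOf_pow, hgord, Nat.gcd_eq_right (Nat.div_dvd_of_dvd hm), Nat.div_div_self hm hn0]
  set h := g ^ (n / p ^ e) with hh
  set c := g ^ (n / q) with hcdef
  have hordh : orderOf h = p ^ e := hordpow _ hpe
  have hordc : orderOf c = q := hordpow _ hqn
  have hld : ∀ i : ℕ, orderOf (h ^ i) ∣ p ^ e := fun i => hordh ▸ orderOf_pow_dvd i
  have hlne : ∀ i : ℕ, 0 < i → i < 4 → orderOf (h ^ i) ≠ 1 := by
    intro i hi hi4 hone
    have h1 : h ^ i = 1 := orderOf_eq_one_iff.mp hone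
    have h2 : p ^ e ∣ i := hordh ▸ orderOf_dvd_of_pow_eq_one h1
    have := Nat.le_of_dvd hi h2
    omega
  have hqpe : ¬ q ∣ p ^ e := by
    intro hdvd
    exact hpq ((Nat.prime_dvd_prime_iff_eq hq hp).mp (hq.dvd_of_dvd_pow hdvd)).symm
  have hkey : ∀ i : ℕ, 0 < i → i < 4 → ((powerGraph G)ᶜ).Adj c (h ^ i) := by
    intro i h1 h2
    have hd1 : ¬ orderOf c ∣ orderOf (h ^ i) := by
      rw [hordc]
      intro hdvd
      exact hqpe (hdvd.trans (hld i))
    have hd2 : ¬ orderOf (h ^ i) ∣ orderOf c := by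
      rw [hordc]
      intro hdvd
      rcases (Nat.dvd_prime hq).mp hdvd with h' | h'
      · exact hlne i h1 h2 h'
      · exact hqpe (h' ▸ hld i)
    rw [SimpleGraph.compl_adj]
    refine ⟨fun heq => hd1 (heq ▸ dvd_rfl), ?_⟩
    rintro ⟨-, hm | hm⟩
    · exact hd1 ((mem_zpowers_iff_orderOf_dvd hc _ _).mp hm)
    · exact hd2 ((mem_zpowers_iff_orderOf_dvd hc _ _).mp hm)
  have hleaf : ∀ i j : ℕ, ¬ ((powerGraph G)ᶜ).Adj (h ^ i) (h ^ j) := by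
    intro i j hadj
    rw [SimpleGraph.compl_adj] at hadj
    obtain ⟨hne, hnadj⟩ := hadj
    apply hnadj
    refine ⟨hne, ?_⟩
    obtain ⟨a, -, ha⟩ := (Nat.dvd_prime_pow hp).mp (hld i)
    obtain ⟨b, -, hb⟩ := (Nat.dvd_prime_pow hp).mp (hld j)
    rcases le_total a b with hab | hab
    · left; rw [mem_zpowers_iff_orderOf_dvd hc, ha, hb]; exact pow_dvd_pow p hab
    · right; rw [mem_zpowers_iff_orderOf_dvd hc, ha, hb]; exact pow_dvd_pow p hab
  have hdist : ∀ i j : ℕ, 0 < i → i < j → j < 4 → h ^ i ≠ h ^ j := by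
    intro i j h1 h2 h3 heq
    have hji : j - i + i = j := by omega
    have hmul : h ^ (j - i) * h ^ i = 1 * h ^ i := by
      rw [← pow_add, hji, ← heq, one_mul]
    have h0 : h ^ (j - i) = 1 := mul_right_cancel hmul
    have hdv : p ^ e ∣ j - i := hordh ▸ orderOf_dvd_of_pow_eq_one h0
    have := Nat.le_of_dvd (by omega) hdv
    omega
  exact noClaw_of_isLineGraph hlg (hkey 1 (by omega) (by omega)) (hkey 2 (by omega) (by omega))
    (hkey 3 (by omega) (by omega)) (hleaf 1 2) (hleaf 1 3) (hleaf 2 3)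
    (hdist 1 2 (by omega) (by omega) (by omega)) (hdist 1 3 (by omega) (by omega) (by omega))
    (hdist 2 3 (by omega) (by omega) (by omega))

/-- for a finite cyclic group, `P(G)` is the complement of a line graph iff
`G ≅ Z₆` or `G ≅ Z_{p^α}` for some prime `p` and `α ≥ 0`. -/
theorem powerGraph_compl_isLineGraph_iff_of_isCyclic (G : Type) [Group G] [Fintype G]
    (hc : IsCyclic G) :
    IsLineGraph (powerGraph G)ᶜ ↔
      (Nonempty (G ≃* Multiplicative (ZMod 6)) ∨
       ∃ p α : ℕ, p.Prime ∧ Nonempty (G ≃* Multiplicative (ZMod (p ^ α)))) := by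
  haveI := hc
  constructor
  · intro hlg
    by_cases hpp : ∃ p α : ℕ, p.Prime ∧ Fintype.card G = p ^ α
    · obtain ⟨p, α, hp, hcard⟩ := hpp
      refine Or.inr ⟨p, α, hp, ⟨mulEquivOfCyclicCardEq ?_⟩⟩
      rw [Nat.card_eq_fintype_card, hcard, Nat.card_congr Multiplicative.toAdd, Nat.card_zmod]
    · by_cases h6 : Fintype.card G = 6
      · refine Or.inl ⟨mulEquivOfCyclicCardEq ?_⟩
        rw [Nat.card_eq_fintype_card, h6, Nat.card_congr Multiplicative.toAdd, Nat.card_zmod]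
      · exfalso
        obtain ⟨p, q, e, hp, hq, hpq, hqd, h4, hpe⟩ := arith_lemma Fintype.card_ne_zero h6 hpp
        exact claw_case hc hp hq hpq hqd h4 hpe hlg
  · intro hyp
    rcases hyp with he | ⟨p, α, hp, he⟩ <;> obtain ⟨e⟩ := he
    · exact isLineGraph_of_iso (isoCompl (powerGraphIso e)) z6_compl_isLineGraph
    · have hcard : Fintype.card G = p ^ α := by
        rw [← Nat.card_eq_fintype_card, Nat.card_congr e.toEquiv,
          Nat.card_congr Multiplicative.toAdd, Nat.card_zmod]
      have hbot : (powerGraph G)ᶜ = ⊥ := by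
        ext x y
        simp only [SimpleGraph.compl_adj, SimpleGraph.bot_adj, iff_false, not_and, not_not]
        intro hne
        refine ⟨hne, ?_⟩
        obtain ⟨a, -, ha⟩ := (Nat.dvd_prime_pow hp).mp (hcard ▸ orderOf_dvd_card (x := x))
        obtain ⟨b, -, hb⟩ := (Nat.dvd_prime_pow hp).mp (hcard ▸ orderOf_dvd_card (x := y))
        rcases le_total a b with hab | hab
        · left; rw [mem_zpowers_iff_orderOf_dvd hc, ha, hb]; exact pow_dvd_pow p hab
        · right; rw [mem_zpowers_iff_orderOf_dvd hc, ha, hb]; exact pow_dvd_pow p hab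
      rw [hbot]
      exact bot_isLineGraph G
end
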